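/- arXiv:1308.0576 — 5 statements merged into one kernel-verified Lean document; each statement's English description precedes it below -/
import Mathlib

section
/- Let P be a probability measure on path space satisfying the forward Markov property: for all t ∈ [0,1] and B ∈ 𝒜_{[t,1]}, P(B | 𝒜_{[0,t]}) = P(B | X_t) a.s. Then for all 0 ≤ s ≤ u ≤ 1 and all A ∈ 𝒜_{[0,s]}, C ∈ 𝒜_{[u,1]}, one has P(A ∩ C | 𝒜_{[s,u]}) = P(A | X_s) P(C | X_u) a.s. -/
open MeasureTheory

noncomputable section

variable {Ω 𝒳 : Type*}

/-- σ-algebra generated by the canonical process on the time window `[s,u]`. -/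
def window [MeasurableSpace 𝒳] (X : ℝ → Ω → 𝒳) (s u : ℝ) : MeasurableSpace Ω :=
  ⨆ r ∈ Set.Icc s u, MeasurableSpace.comap (X r) inferInstance

/-- σ-algebra generated by the position at time `t`. -/
def at1 [MeasurableSpace 𝒳] (X : ℝ → Ω → 𝒳) (t : ℝ) : MeasurableSpace Ω :=
  MeasurableSpace.comap (X t) inferInstance

/-- σ-algebra generated by the pair of positions at times `s` and `u`. -/
def at2 [MeasurableSpace 𝒳] (X : ℝ → Ω → 𝒳) (s u : ℝ) : MeasurableSpace Ω :=
  MeasurableSpace.comap (fun ω => (X s ω, X u ω)) inferInstance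

/-- Indicator function of an event, real-valued. -/
def ind (A : Set Ω) : Ω → ℝ := A.indicator (fun _ => 1)

/-- The two-sided (symmetric) Markov property: for every time `t ∈ [0,1]`, past and future
events are conditionally independent given the present position `X t`. -/
def IsMarkov [MeasurableSpace Ω] [MeasurableSpace 𝒳]
    (X : ℝ → Ω → 𝒳) (P : Measure Ω) : Prop :=
  ∀ t ∈ Set.Icc (0:ℝ) 1, ∀ A B : Set Ω,
    MeasurableSet[window X 0 t] A → MeasurableSet[window X t 1] B →
    P[ind (A ∩ B) | at1 X t] =ᵐ[P] P[ind A | at1 X t] * P[ind B | at1 X t]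

/-- The reciprocal property: for all `0 ≤ s ≤ u ≤ 1`, the events inside `[s,u]` and those
outside are conditionally independent given the pair `(X s, X u)`. -/
def IsReciprocal [MeasurableSpace Ω] [MeasurableSpace 𝒳]
    (X : ℝ → Ω → 𝒳) (P : Measure Ω) : Prop :=
  ∀ s u : ℝ, 0 ≤ s → s ≤ u → u ≤ 1 → ∀ A B C : Set Ω,
    MeasurableSet[window X 0 s] A → MeasurableSet[window X s u] B →
    MeasurableSet[window X u 1] C →
    P[ind (A ∩ B ∩ C) | at2 X s u] =ᵐ[P]
      P[ind (A ∩ C) | at2 X s u] * P[ind B | at2 X s u]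

section Aux

variable [MeasurableSpace Ω] [MeasurableSpace 𝒳]
  {X : ℝ → Ω → 𝒳} {P : Measure Ω}

lemma window_le_amb (hX : ∀ t, Measurable (X t)) (s u : ℝ) :
    window X s u ≤ ‹MeasurableSpace Ω› :=
  iSup₂_le fun r _ => (hX r).comap_le

lemma at1_le_window {t s u : ℝ} (hs : s ≤ t) (hu : t ≤ u) :
    at1 X t ≤ window X s u :=
  le_iSup₂ (f := fun r (_ : r ∈ Set.Icc s u) =>
    MeasurableSpace.comap (X r) inferInstance) t ⟨hs, hu⟩

lemma window_mono {s u s' u' : ℝ} (hs : s' ≤ s) (hu : u ≤ u') :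
    window X s u ≤ window X s' u' :=
  iSup₂_le fun r hr => le_iSup₂ (f := fun r (_ : r ∈ Set.Icc s' u') =>
    MeasurableSpace.comap (X r) inferInstance) r ⟨hs.trans hr.1, hr.2.trans hu⟩

lemma stronglyMeasurable_ind {m : MeasurableSpace Ω} {A : Set Ω}
    (hA : MeasurableSet[m] A) : StronglyMeasurable[m] (ind A) :=
  stronglyMeasurable_const.indicator hA

lemma integrable_ind [IsProbabilityMeasure P] {A : Set Ω}
    (hA : MeasurableSet A) : Integrable (ind A) P :=
  (integrable_const (1 : ℝ) (μ := P)).indicator hA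

lemma ind_nonneg {A : Set Ω} (ω : Ω) : 0 ≤ ind A ω :=
  Set.indicator_nonneg (fun _ _ => zero_le_one) ω

lemma ind_le_one {A : Set Ω} (ω : Ω) : ind A ω ≤ 1 := by
  by_cases h : ω ∈ A <;> simp [ind, h]

lemma norm_ind_le_one {A : Set Ω} (ω : Ω) : ‖ind A ω‖ ≤ 1 := by
  rw [Real.norm_eq_abs, abs_le]
  exact ⟨by linarith [ind_nonneg (A := A) ω], ind_le_one ω⟩

lemma ind_inter {A B : Set Ω} : ind (A ∩ B) = ind A * ind B := by
  funext ω; by_cases hA : ω ∈ A <;> by_cases hB : ω ∈ B <;>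
    simp [ind, Set.indicator_apply, hA, hB]

lemma indicator_eq_mul_ind {B : Set Ω} (g : Ω → ℝ) :
    B.indicator g = fun ω => g ω * ind B ω := by
  funext ω; by_cases h : ω ∈ B <;> simp [ind, Set.indicator_apply, h]

omit [MeasurableSpace Ω] [MeasurableSpace 𝒳] in
/-- The conditional expectation of an indicator is a.e. bounded in norm by `1`. -/
lemma norm_condexp_ind_le_one {m : MeasurableSpace Ω} [mΩ : MeasurableSpace Ω]
    {P : Measure Ω} [IsProbabilityMeasure P]
    (hm : m ≤ mΩ) {A : Set Ω}
    (hA : MeasurableSet[mΩ] A) :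
    ∀ᵐ ω ∂P, ‖(P[ind A | m]) ω‖ ≤ 1 := by
  have hint : Integrable (ind A) P := (integrable_const (1 : ℝ) (μ := P)).indicator hA
  have h0 : 0 ≤ᵐ[P] P[ind A | m] :=
    condExp_nonneg (ae_of_all _ fun ω => ind_nonneg ω)
  have h1 : P[ind A | m] ≤ᵐ[P] P[(fun _ => (1:ℝ)) | m] :=
    condExp_mono hint (integrable_const 1)
      (ae_of_all _ fun ω => ind_le_one ω)
  rw [condExp_const hm] at h1
  filter_upwards [h0, h1] with ω hω0 hω1
  simp only [Pi.zero_apply] at hω0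
  rw [Real.norm_eq_abs, abs_le]; exact ⟨by linarith, hω1⟩

/-- Conditional independence of past and future given the present position,
derived from the forward Markov property. -/
lemma ci_of_fwd [IsProbabilityMeasure P]
    (hX : ∀ t, Measurable (X t))
    (hfwd : ∀ t ∈ Set.Icc (0:ℝ) 1, ∀ B : Set Ω, MeasurableSet[window X t 1] B →
      P[ind B | window X 0 t] =ᵐ[P] P[ind B | at1 X t])
    {s : ℝ} (h0 : 0 ≤ s) (h1 : s ≤ 1) {A B : Set Ω}
    (hA : MeasurableSet[window X 0 s] A) (hB : MeasurableSet[window X s 1] B) :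
    P[ind A * ind B | at1 X s] =ᵐ[P] P[ind A | at1 X s] * P[ind B | at1 X s] := by
  have hamb : window X 0 s ≤ ‹MeasurableSpace Ω› := window_le_amb hX 0 s
  have hamb1 : window X s 1 ≤ ‹MeasurableSpace Ω› := window_le_amb hX s 1
  have hat : at1 X s ≤ window X 0 s := at1_le_window h0 le_rfl
  have hatamb : at1 X s ≤ ‹MeasurableSpace Ω› := (hX s).comap_le
  have hA' : MeasurableSet A := hamb _ hA
  have hB' : MeasurableSet B := hamb1 _ hB
  have hintA : Integrable (ind A) P := integrable_ind hA'
  have hintB : Integrable (ind B) P := integrable_ind hB'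
  have hintAB : Integrable (ind A * ind B) P :=
    hintB.bdd_mul hintA.aestronglyMeasurable (ae_of_all _ fun ω => norm_ind_le_one ω)
  -- pull `ind A` out of the conditional expectation given the past
  have hinner : P[ind A * ind B | window X 0 s] =ᵐ[P]
      ind A * P[ind B | at1 X s] := by
    refine (condExp_mul_of_stronglyMeasurable_left (stronglyMeasurable_ind hA)
      hintAB hintB).trans ?_
    filter_upwards [hfwd s ⟨h0, h1⟩ B hB] with ω hω
    simp only [Pi.mul_apply, hω]
  -- tower property
  have htower : P[ind A * ind B | at1 X s] =ᵐ[P]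
      P[P[ind A * ind B | window X 0 s] | at1 X s] :=
    (condExp_condExp_of_le hat hamb).symm
  have hbd := norm_condexp_ind_le_one (P := P) hatamb hB'
  have hmeasg : AEStronglyMeasurable (P[ind B | at1 X s]) P :=
    (stronglyMeasurable_condExp.mono hatamb).aestronglyMeasurable
  have hint2 : Integrable (P[ind B | at1 X s] * ind A) P :=
    hintA.bdd_mul hmeasg hbd
  refine htower.trans ?_
  calc P[P[ind A * ind B | window X 0 s] | at1 X s]
      =ᵐ[P] P[P[ind B | at1 X s] * ind A | at1 X s] := by
        refine condExp_congr_ae (hinner.trans ?_)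
        exact ae_of_all _ fun ω => mul_comm _ _
    _ =ᵐ[P] P[ind B | at1 X s] * P[ind A | at1 X s] :=
        condExp_mul_of_stronglyMeasurable_left stronglyMeasurable_condExp hint2 hintA
    _ =ᵐ[P] P[ind A | at1 X s] * P[ind B | at1 X s] :=
        ae_of_all _ fun ω => mul_comm _ _

/-- Backward conditioning: an event of the past, conditioned on the window `[s,u]`,
only depends on the position at time `s`. -/
lemma bwd_of_fwd [IsProbabilityMeasure P]
    (hX : ∀ t, Measurable (X t))
    (hfwd : ∀ t ∈ Set.Icc (0:ℝ) 1, ∀ B : Set Ω, MeasurableSet[window X t 1] B →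
      P[ind B | window X 0 t] =ᵐ[P] P[ind B | at1 X t])
    {s u : ℝ} (h0 : 0 ≤ s) (hsu : s ≤ u) (h1 : u ≤ 1) {A : Set Ω}
    (hA : MeasurableSet[window X 0 s] A) :
    P[ind A | window X s u] =ᵐ[P] P[ind A | at1 X s] := by
  have hamb : window X 0 s ≤ ‹MeasurableSpace Ω› := window_le_amb hX 0 s
  have hmsu : window X s u ≤ ‹MeasurableSpace Ω› := window_le_amb hX s u
  have hatamb : at1 X s ≤ ‹MeasurableSpace Ω› := (hX s).comap_le
  have hat_su : at1 X s ≤ window X s u := at1_le_window le_rfl hsu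
  have hA' : MeasurableSet A := hamb _ hA
  have hintA : Integrable (ind A) P := integrable_ind hA'
  have hs1 : s ≤ 1 := hsu.trans h1
  set g : Ω → ℝ := P[ind A | at1 X s] with hg
  have hbd : ∀ᵐ ω ∂P, ‖g ω‖ ≤ 1 := norm_condexp_ind_le_one (P := P) hatamb hA'
  have hmeasg : AEStronglyMeasurable g P :=
    (stronglyMeasurable_condExp.mono hatamb).aestronglyMeasurable
  have hintg : Integrable g P := integrable_condExp
  refine (ae_eq_condExp_of_forall_setIntegral_eq hmsu hintA
    (fun B _ _ => hintg.integrableOn) (fun B hB _ => ?_)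
    (stronglyMeasurable_condExp.mono hat_su).aestronglyMeasurable).symm
  -- B is measurable for the window [s,u], hence for [s,1]
  have hB1 : MeasurableSet[window X s 1] B := window_mono le_rfl h1 _ hB
  have hB' : MeasurableSet B := hmsu _ hB
  have hintB : Integrable (ind B) P := integrable_ind hB'
  have hintgB : Integrable (fun ω => g ω * ind B ω) P := hintB.bdd_mul hmeasg hbd
  have hintAB : Integrable (ind A * ind B) P :=
    hintB.bdd_mul hintA.aestronglyMeasurable (ae_of_all _ fun ω => norm_ind_le_one ω)
  calc ∫ ω in B, g ω ∂P
      = ∫ ω, B.indicator g ω ∂P := (integral_indicator hB').symm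
    _ = ∫ ω, g ω * ind B ω ∂P := by rw [indicator_eq_mul_ind]
    _ = ∫ ω, (P[fun ω => g ω * ind B ω | at1 X s]) ω ∂P :=
        (integral_condExp hatamb).symm
    _ = ∫ ω, (g * P[ind B | at1 X s]) ω ∂P := by
        refine integral_congr_ae (condExp_mul_of_stronglyMeasurable_left
          stronglyMeasurable_condExp hintgB hintB)
    _ = ∫ ω, (P[ind A | at1 X s] * P[ind B | at1 X s]) ω ∂P := rfl
    _ = ∫ ω, (P[ind A * ind B | at1 X s]) ω ∂P :=
        (integral_congr_ae (ci_of_fwd hX hfwd h0 hs1 hA hB1)).symm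
    _ = ∫ ω, (ind A * ind B) ω ∂P := integral_condExp hatamb
    _ = ∫ ω, B.indicator (ind A) ω ∂P := by rw [indicator_eq_mul_ind (ind A)]; rfl
    _ = ∫ ω in B, ind A ω ∂P := integral_indicator hB'

end Aux

/-- the forward Markov property implies that past and future are conditionally
independent given the inner trajectory, with conditional probabilities depending only on the
boundary positions. -/
theorem forward_markov_implies_past_future_indep
    [MeasurableSpace Ω] [MeasurableSpace 𝒳]
    (X : ℝ → Ω → 𝒳) (hX : ∀ t, Measurable (X t))
    (P : Measure Ω) [IsProbabilityMeasure P]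
    (hfwd : ∀ t ∈ Set.Icc (0:ℝ) 1, ∀ B : Set Ω, MeasurableSet[window X t 1] B →
      P[ind B | window X 0 t] =ᵐ[P] P[ind B | at1 X t]) :
    ∀ s u : ℝ, 0 ≤ s → s ≤ u → u ≤ 1 → ∀ A C : Set Ω,
      MeasurableSet[window X 0 s] A → MeasurableSet[window X u 1] C →
      P[ind (A ∩ C) | window X s u] =ᵐ[P] P[ind A | at1 X s] * P[ind C | at1 X u] := by
  intro s u h0 hsu h1 A C hA hC
  have h0u : 0 ≤ u := h0.trans hsu
  have hamb0u : window X 0 u ≤ ‹MeasurableSpace Ω› := window_le_amb hX 0 u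
  have hsu0u : window X s u ≤ window X 0 u := window_mono h0 le_rfl
  have hatU : at1 X u ≤ ‹MeasurableSpace Ω› := (hX u).comap_le
  have hA0u : MeasurableSet[window X 0 u] A := window_mono le_rfl hsu _ hA
  have hA' : MeasurableSet A := hamb0u _ hA0u
  have hC' : MeasurableSet C := window_le_amb hX u 1 _ hC
  have hintA : Integrable (ind A) P := integrable_ind hA'
  have hintC : Integrable (ind C) P := integrable_ind hC'
  have hintAC : Integrable (ind A * ind C) P :=
    hintC.bdd_mul hintA.aestronglyMeasurable (ae_of_all _ fun ω => norm_ind_le_one ω)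
  rw [ind_inter]
  have hinner : P[ind A * ind C | window X 0 u] =ᵐ[P]
      ind A * P[ind C | at1 X u] := by
    refine (condExp_mul_of_stronglyMeasurable_left (stronglyMeasurable_ind hA0u)
      hintAC hintC).trans ?_
    filter_upwards [hfwd u ⟨h0u, h1⟩ C hC] with ω hω
    simp only [Pi.mul_apply, hω]
  have hmeas_h : StronglyMeasurable[window X s u] (P[ind C | at1 X u]) :=
    stronglyMeasurable_condExp.mono (at1_le_window hsu le_rfl)
  have hbd_h : ∀ᵐ ω ∂P, ‖(P[ind C | at1 X u]) ω‖ ≤ 1 :=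
    norm_condexp_ind_le_one (P := P) hatU hC'
  have hint_hA : Integrable (P[ind C | at1 X u] * ind A) P :=
    hintA.bdd_mul (stronglyMeasurable_condExp.mono hatU).aestronglyMeasurable hbd_h
  calc P[ind A * ind C | window X s u]
      =ᵐ[P] P[P[ind A * ind C | window X 0 u] | window X s u] :=
        (condExp_condExp_of_le hsu0u hamb0u).symm
    _ =ᵐ[P] P[P[ind C | at1 X u] * ind A | window X s u] := by
        refine condExp_congr_ae (hinner.trans ?_)
        exact ae_of_all _ fun ω => mul_comm _ _
    _ =ᵐ[P] P[ind C | at1 X u] * P[ind A | window X s u] :=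
        condExp_mul_of_stronglyMeasurable_left hmeas_h hint_hA hintA
    _ =ᵐ[P] P[ind C | at1 X u] * P[ind A | at1 X s] := by
        filter_upwards [bwd_of_fwd hX hfwd h0 hsu h1 hA] with ω hω
        simp only [Pi.mul_apply, hω]
    _ =ᵐ[P] P[ind A | at1 X s] * P[ind C | at1 X u] :=
        ae_of_all _ fun ω => mul_comm _ _
end
end

section
/- Let R be a probability measure on a space Ω with a σ-algebra generated by a random variable X_t, and suppose Z = α β is R-integrable with α, β ≥ 0 measurable, and E_R(αβ | X_t) = E_R(α | X_t) E_R(β | X_t) on the event where the product is positive. Set P = Z·R (assuming E_R Z = 1). Then P-a.s., α and β are R(·|X_t)-integrable and 0 < E_R(αβ | X_t) = E_R(α | X_t) E_R(β | X_t) P-a.s., and R-a.s. E_R(αβ | X_t) = 1_{E_R(α|X_t)E_R(β|X_t) < ∞} E_R(α|X_t) E_R(β|X_t). -/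
open MeasureTheory ProbabilityTheory

noncomputable section

variable {Ω 𝒳 : Type*}

/-- Conditional expectation of a `[0,∞]`-valued function given a sub-σ-algebra, defined via
the conditional expectation kernel. -/
def condExpNN (m : MeasurableSpace Ω) [MeasurableSpace Ω] [StandardBorelSpace Ω] [Nonempty Ω]
    (R : Measure Ω) [IsFiniteMeasure R] (f : Ω → ENNReal) : Ω → ENNReal :=
  fun ω => ∫⁻ x, f x ∂(condExpKernel R m ω)

open Set MeasurableSpace in
lemma aux_ennreal_generateFrom :
    (inferInstance : MeasurableSpace ENNReal) =
      .generateFrom (Set.range (fun q : ℚ => Set.Iic (ENNReal.ofReal q))) := by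
  refine le_antisymm ?_ (generateFrom_le ?_)
  · have hb : (borel ENNReal) ≤
        generateFrom (Set.range (fun q : ℚ => Set.Iic (ENNReal.ofReal q))) := by
      rw [borel_eq_generateFrom_Iic]
      refine generateFrom_le ?_
      rintro _ ⟨x, rfl⟩
      by_cases hx : x = ⊤
      · subst hx
        simp only [Set.Iic_top]
        exact MeasurableSet.univ
      · have hset : Set.Iic x =
            ⋂ (q : ℚ) (_ : x ≤ ENNReal.ofReal q), Set.Iic (ENNReal.ofReal q) := by
          ext y
          simp only [Set.mem_Iic, Set.mem_iInter]
          constructor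
          · exact fun h q hq => h.trans hq
          · intro h
            by_contra hxy
            rw [not_le] at hxy
            obtain ⟨q, hq0, h1, h2⟩ := ENNReal.lt_iff_exists_rat_btwn.mp hxy
            exact absurd (h q h1.le) (not_le.mpr h2)
        rw [hset]
        exact MeasurableSet.iInter fun q => MeasurableSet.iInter fun _ =>
          .basic _ ⟨q, rfl⟩
    exact le_trans (le_of_eq BorelSpace.measurable_eq) hb
  · rintro _ ⟨q, rfl⟩; exact measurableSet_Iic

lemma aux_isPiSystem_ennreal :
    IsPiSystem (Set.range (fun q : ℚ => Set.Iic (ENNReal.ofReal q))) := by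
  rintro _ ⟨q, rfl⟩ _ ⟨r, rfl⟩ -
  refine ⟨min q r, ?_⟩
  show Set.Iic (ENNReal.ofReal ((min q r : ℚ) : ℝ)) = _
  rw [Set.Iic_inter_Iic, Rat.cast_min,
    Monotone.map_min (fun _ _ h => ENNReal.ofReal_le_ofReal h)]

lemma aux_setLintegral_condExpKernel_measure {Ω : Type*} {m : MeasurableSpace Ω}
    [mΩ : MeasurableSpace Ω] [StandardBorelSpace Ω] [Nonempty Ω] (hm : m ≤ mΩ)
    (R : Measure Ω) [IsFiniteMeasure R] {S T : Set Ω}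
    (hS : MeasurableSet[m] S) (hT : MeasurableSet T) :
    ∫⁻ ω in S, condExpKernel R m ω T ∂ R = R (S ∩ T) := by
  simp_rw [condExpKernel_apply_eq_condDistrib]
  have ht : MeasurableSet[(m ⊓ mΩ).comap id] S := by
    rw [MeasurableSpace.comap_id, inf_of_le_left hm]; exact hS
  have := setLIntegral_condDistrib_of_measurableSet (mβ := m ⊓ mΩ)
    (X := (id : Ω → Ω)) (Y := (id : Ω → Ω)) (μ := R)
    (measurable_id'' (inf_le_right : m ⊓ mΩ ≤ mΩ)) aemeasurable_id hT ht
  simpa using this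

lemma aux_tower {Ω : Type*} {m : MeasurableSpace Ω}
    [mΩ : MeasurableSpace Ω] [StandardBorelSpace Ω] [Nonempty Ω] (hm : m ≤ mΩ)
    (R : Measure Ω) [IsFiniteMeasure R] {S : Set Ω} (hS : MeasurableSet[m] S)
    {f : Ω → ENNReal} (hf : Measurable f) :
    ∫⁻ ω in S, ∫⁻ x, f x ∂(condExpKernel R m ω) ∂ R = ∫⁻ ω in S, f ω ∂ R := by
  have hκmeas : Measurable (fun ω => condExpKernel R m ω) :=
    ((condExpKernel R m).measurable).mono hm le_rfl
  have hbind : (R.restrict S).bind (fun ω => condExpKernel R m ω) = R.restrict S := by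
    ext T hT
    rw [Measure.bind_apply hT hκmeas.aemeasurable]
    have h1 : ∫⁻ ω, condExpKernel R m ω T ∂(R.restrict S)
        = ∫⁻ ω in S, condExpKernel R m ω T ∂ R := rfl
    rw [h1, aux_setLintegral_condExpKernel_measure hm R hS hT,
      Measure.restrict_apply hT, Set.inter_comm]
  conv_rhs => rw [← hbind]
  rw [Measure.lintegral_bind hκmeas.aemeasurable hf.aemeasurable]

lemma aux_main {Ω : Type*} {m 𝒢₁ 𝒢₂ : MeasurableSpace Ω}
    [mΩ : MeasurableSpace Ω] [StandardBorelSpace Ω] [Nonempty Ω]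
    (hm : m ≤ mΩ)
    (h𝒢₁ : 𝒢₁ ≤ mΩ) (h𝒢₂ : 𝒢₂ ≤ mΩ)
    (R : Measure Ω) [IsProbabilityMeasure R]
    (hindep : ProbabilityTheory.Kernel.Indep 𝒢₁ 𝒢₂ (condExpKernel R m) (R.trim hm))
    (α β : Ω → ENNReal) (hα : Measurable[𝒢₁] α) (hβ : Measurable[𝒢₂] β)
    (hint : ∫⁻ ω, α ω * β ω ∂ R = 1)
    (P : Measure Ω) (hP : P = R.withDensity (fun ω => α ω * β ω)) :
    (∀ᵐ ω ∂P, condExpNN m R α ω < ⊤ ∧ condExpNN m R β ω < ⊤) ∧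
    (∀ᵐ ω ∂P, 0 < condExpNN m R (fun x => α x * β x) ω ∧
        condExpNN m R (fun x => α x * β x) ω = condExpNN m R α ω * condExpNN m R β ω) ∧
    (∀ᵐ ω ∂ R, condExpNN m R (fun x => α x * β x) ω =
          if condExpNN m R α ω * condExpNN m R β ω < ⊤ then
            condExpNN m R α ω * condExpNN m R β ω
          else 0) := by
  have hαm : Measurable α := hα.mono h𝒢₁ le_rfl
  have hβm : Measurable β := hβ.mono h𝒢₂ le_rfl
  have hab : Measurable (fun x => α x * β x) := hαm.mul hβm
  set κ := condExpKernel R m with hκ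
  set F : Ω → ENNReal := condExpNN m R (fun x => α x * β x) with hF
  set G : Ω → ENNReal := condExpNN m R α with hG
  set H : Ω → ENNReal := condExpNN m R β with hH
  -- measurability of F w.r.t. m
  have hFm : Measurable[m] F := by
    have h1 : @Measurable (Ω × Ω) ENNReal (@Prod.instMeasurableSpace Ω Ω m mΩ) _
        (Function.uncurry fun (_ : Ω) (x : Ω) => α x * β x) :=
      Measurable.comp hab (@measurable_snd Ω Ω m mΩ)
    exact Measurable.lintegral_kernel_prod_right (κ := κ) h1
  -- F has integral 1, hence is a.e. finite
  have hFint : ∫⁻ ω, F ω ∂ R = 1 := by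
    have := aux_tower hm R (@MeasurableSet.univ Ω m) hab
    simpa [Measure.restrict_univ, hF, condExpNN] using this.trans (by simpa using hint)
  have hFfin : ∀ᵐ ω ∂ R, F ω < ⊤ :=
    ae_lt_top (hFm.mono hm le_rfl) (by rw [hFint]; exact ENNReal.one_ne_top)
  -- on the set where F vanishes, αβ vanishes a.e.
  have hpos : ∀ᵐ ω ∂ R, α ω * β ω ≠ 0 → 0 < F ω := by
    set S : Set Ω := {ω | F ω = 0} with hS
    have hSm : MeasurableSet[m] S := hFm (measurableSet_singleton 0)
    have h0 : ∫⁻ ω in S, α ω * β ω ∂ R = 0 := by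
      rw [← aux_tower hm R hSm hab]
      have : ∀ᵐ ω ∂(R.restrict S), F ω = 0 := by
        refine (ae_restrict_iff' (hm _ hSm)).2 (ae_of_all _ ?_)
        exact fun ω hω => hω
      calc ∫⁻ ω in S, F ω ∂ R = ∫⁻ _ in S, 0 ∂ R := lintegral_congr_ae this
        _ = 0 := by simp
    have h1 : ∀ᵐ ω ∂(R.restrict S), α ω * β ω = 0 := by
      have := (lintegral_eq_zero_iff hab).1 h0
      filter_upwards [this] with ω hω
      simpa using hω
    have h2 : ∀ᵐ ω ∂ R, ω ∈ S → α ω * β ω = 0 := (ae_restrict_iff' (hm _ hSm)).1 h1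
    filter_upwards [h2] with ω hω hne
    rcases eq_or_ne (F ω) 0 with h | h
    · exact absurd (hω h) hne
    · exact pos_iff_ne_zero.2 h
  -- conditional independence gives the product formula a.e.
  have hQ : ∀ q r : ℚ, ∀ᵐ ω ∂ R,
      κ ω ((α ⁻¹' Set.Iic (ENNReal.ofReal q)) ∩ (β ⁻¹' Set.Iic (ENNReal.ofReal r)))
        = κ ω (α ⁻¹' Set.Iic (ENNReal.ofReal q)) * κ ω (β ⁻¹' Set.Iic (ENNReal.ofReal r)) :=
    fun q r => ae_of_ae_trim hm
      (hindep _ _ (hα measurableSet_Iic) (hβ measurableSet_Iic))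
  have hQae : ∀ᵐ ω ∂ R, ∀ q r : ℚ,
      κ ω ((α ⁻¹' Set.Iic (ENNReal.ofReal q)) ∩ (β ⁻¹' Set.Iic (ENNReal.ofReal r)))
        = κ ω (α ⁻¹' Set.Iic (ENNReal.ofReal q)) * κ ω (β ⁻¹' Set.Iic (ENNReal.ofReal r)) :=
    ae_all_iff.2 fun q => ae_all_iff.2 fun r => hQ q r
  have hprod : ∀ᵐ ω ∂ R, F ω = G ω * H ω := by
    filter_upwards [hQae] with ω hω
    have hind : ProbabilityTheory.Indep (MeasurableSpace.comap α inferInstance)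
        (MeasurableSpace.comap β inferInstance) (κ ω) := by
      have himg : ∀ (g : Ω → ENNReal),
          (Set.preimage g '' (Set.range (fun q : ℚ => Set.Iic (ENNReal.ofReal q))))
            = {s | ∃ t ∈ Set.range (fun q : ℚ => Set.Iic (ENNReal.ofReal q)), g ⁻¹' t = s} := by
        intro g; ext s; simp [Set.image]
      refine IndepSets.indep hαm.comap_le hβm.comap_le
        (aux_isPiSystem_ennreal.comap α) (aux_isPiSystem_ennreal.comap β) ?_ ?_ ?_
      · conv_lhs => rw [aux_ennreal_generateFrom]
        rw [MeasurableSpace.comap_generateFrom, himg α]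
      · conv_lhs => rw [aux_ennreal_generateFrom]
        rw [MeasurableSpace.comap_generateFrom, himg β]
      · rintro s t ⟨_, ⟨q, rfl⟩, rfl⟩ ⟨_, ⟨r, rfl⟩, rfl⟩
        exact ae_of_all _ fun _ => hω q r
    exact lintegral_mul_eq_lintegral_mul_lintegral_of_independent_measurableSpace
      hαm.comap_le hβm.comap_le hind
      (Measurable.of_comap_le le_rfl) (Measurable.of_comap_le le_rfl)
  -- assemble the three conclusions
  have hPae : ∀ {p : Ω → Prop}, (∀ᵐ ω ∂ R, α ω * β ω ≠ 0 → p ω) → ∀ᵐ ω ∂P, p ω := by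
    intro p h
    rw [hP, ae_withDensity_iff hab]
    exact h
  refine ⟨?_, ?_, ?_⟩
  · refine hPae ?_
    filter_upwards [hFfin, hpos, hprod] with ω h1 h2 h3 hne
    have hpos' := h2 hne
    rw [h3] at h1 hpos'
    constructor
    · by_contra hG
      rw [not_lt, top_le_iff] at hG
      rcases eq_or_ne (H ω) 0 with h | h
      · rw [hG, h, mul_zero] at hpos'; exact lt_irrefl _ hpos'
      · rw [hG, ENNReal.top_mul h] at h1; exact lt_irrefl _ h1
    · by_contra hH
      rw [not_lt, top_le_iff] at hH
      rcases eq_or_ne (G ω) 0 with h | h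
      · rw [hH, h, zero_mul] at hpos'; exact lt_irrefl _ hpos'
      · rw [hH, ENNReal.mul_top h] at h1; exact lt_irrefl _ h1
  · refine hPae ?_
    filter_upwards [hpos, hprod] with ω h2 h3 hne
    exact ⟨h2 hne, h3⟩
  · filter_upwards [hFfin, hprod] with ω h1 h2
    rw [if_pos (h2 ▸ h1)]
    exact h2

/-- the integration lemma about conditionally independent nonnegative factors.
If `α` is `𝒢₁`-measurable, `β` is `𝒢₂`-measurable, `𝒢₁` and `𝒢₂` are conditionally independent
given `σ(X_t)` under `R`, and `Z = αβ` is `R`-integrable with `P = Z·R` a probability measure,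
then `P`-a.s. `α` and `β` are conditionally integrable and
`0 < E_R(αβ|X_t) = E_R(α|X_t)E_R(β|X_t)`, while `R`-a.s.
`E_R(αβ|X_t) = 1_{E_R(α|X_t)E_R(β|X_t)<∞} E_R(α|X_t)E_R(β|X_t)`. -/
theorem conditionally_independent_factors_integration
    (𝒢₁ 𝒢₂ : MeasurableSpace Ω)
    [MeasurableSpace Ω] [StandardBorelSpace Ω] [Nonempty Ω] [MeasurableSpace 𝒳]
    (Xt : Ω → 𝒳) (hXt : Measurable Xt)
    (h𝒢₁ : 𝒢₁ ≤ ‹MeasurableSpace Ω›) (h𝒢₂ : 𝒢₂ ≤ ‹MeasurableSpace Ω›)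
    (R : Measure Ω) [IsProbabilityMeasure R]
    (hindep : CondIndep (MeasurableSpace.comap Xt inferInstance) 𝒢₁ 𝒢₂ hXt.comap_le R)
    (α β : Ω → ENNReal) (hα : Measurable[𝒢₁] α) (hβ : Measurable[𝒢₂] β)
    (hint : ∫⁻ ω, α ω * β ω ∂ R = 1)
    (P : Measure Ω) (hP : P = R.withDensity (fun ω => α ω * β ω)) :
    (∀ᵐ ω ∂P,
        condExpNN (MeasurableSpace.comap Xt inferInstance) R α ω < ⊤ ∧
        condExpNN (MeasurableSpace.comap Xt inferInstance) R β ω < ⊤) ∧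
    (∀ᵐ ω ∂P,
        0 < condExpNN (MeasurableSpace.comap Xt inferInstance) R (fun x => α x * β x) ω ∧
        condExpNN (MeasurableSpace.comap Xt inferInstance) R (fun x => α x * β x) ω =
          condExpNN (MeasurableSpace.comap Xt inferInstance) R α ω *
          condExpNN (MeasurableSpace.comap Xt inferInstance) R β ω) ∧
    (∀ᵐ ω ∂ R,
        condExpNN (MeasurableSpace.comap Xt inferInstance) R (fun x => α x * β x) ω =
          if condExpNN (MeasurableSpace.comap Xt inferInstance) R α ω *
              condExpNN (MeasurableSpace.comap Xt inferInstance) R β ω < ⊤ then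
            condExpNN (MeasurableSpace.comap Xt inferInstance) R α ω *
            condExpNN (MeasurableSpace.comap Xt inferInstance) R β ω
          else 0) := by
  exact aux_main hXt.comap_le h𝒢₁ h𝒢₂ R hindep α β hα hβ hint P hP
end
end

section
/- There exists a reciprocal probability measure that is not Markov. Concretely, on the three-point state space {a,b,c} with Ω the space of càdlàg paths on [0,1], the measure P = (1/2)(δ_{abc} + δ_{cba}), where abc is the path equal to a on [0,1/3), c on [1/3,2/3), b on [2/3,1] (and cba its reversal of states), is reciprocal but satisfies P(X_1 = a | X_0 = a, X_{1/3} = b) = 0 while P(X_1 = a | X_{1/3} = b) = 1/2; hence P is not Markov. -/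
open MeasureTheory

noncomputable section

variable {Ω 𝒳 : Type*}

/-- The forward Markov property. -/
def IsForwardMarkov [MeasurableSpace Ω] [MeasurableSpace 𝒳]
    (X : ℝ → Ω → 𝒳) (P : Measure Ω) : Prop :=
  ∀ t ∈ Set.Icc (0:ℝ) 1, ∀ B : Set Ω, MeasurableSet[window X t 1] B →
    P[ind B | window X 0 t] =ᵐ[P] P[ind B | at1 X t]


namespace ThreeStates

/-- The three-point state space `{a, b, c}`, encoded as `Fin 3` (`a = 0`, `b = 1`, `c = 2`). -/
abbrev 𝒮 : Type := Fin 3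

/-- Path space: functions from `ℝ` to the three-point state space. -/
abbrev Path : Type := ℝ → 𝒮

/-- The canonical process. -/
def Xc : ℝ → Path → 𝒮 := fun t ω => ω t

/-- The path `abc`: equal to `a` on `[0,1/3)`, `b` on `[1/3,2/3)`, `c` on `[2/3,1]`. -/
def wabc : Path := fun t => if t < 1/3 then 0 else if t < 2/3 then 1 else 2

/-- The path `cba`: equal to `c` on `[0,1/3)`, `b` on `[1/3,2/3)`, `a` on `[2/3,1]`. -/
def wcba : Path := fun t => if t < 1/3 then 2 else if t < 2/3 then 1 else 0

/-- The measure `P = (1/2)(δ_{abc} + δ_{cba})`. -/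
def Pmix : Measure Path := (2:ENNReal)⁻¹ • (Measure.dirac wabc + Measure.dirac wcba)

end ThreeStates

/-! ### Auxiliary lemmas -/

section Aux
open scoped Classical

variable {α : Type*}

/-- The half-half mixture of two Dirac measures. -/
def mix [MeasurableSpace α] (x y : α) : Measure α :=
  (2:ENNReal)⁻¹ • (Measure.dirac x + Measure.dirac y)

lemma mix_prob [MeasurableSpace α] (x y : α) : IsProbabilityMeasure (mix x y) := by
  constructor
  simp [mix, Measure.add_apply]
  exact ENNReal.inv_two_add_inv_two

lemma ind_apply (A : Set α) (ω : α) : ind A ω = if ω ∈ A then 1 else 0 := by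
  simp [ind, Set.indicator_apply]

lemma ind_sm [MeasurableSpace α] {A : Set α} (hA : MeasurableSet A) :
    StronglyMeasurable (ind A) :=
  (measurable_const.indicator hA).stronglyMeasurable

lemma ind_norm (A : Set α) (ω : α) : ‖ind A ω‖ ≤ 1 := by
  rw [ind_apply]; split <;> simp

lemma ind_split (A B C : Set α) (a : α) :
    ind (A ∩ B ∩ C) a = ind (A ∩ C) a * ind B a := by
  rw [ind_apply, ind_apply, ind_apply]
  by_cases hA : a ∈ A <;> by_cases hB : a ∈ B <;> by_cases hC : a ∈ C <;>
    simp [hA, hB, hC, Set.mem_inter_iff]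

lemma bdd_integrable [MeasurableSpace α] {μ : Measure α} [IsFiniteMeasure μ] {f : α → ℝ}
    (hf : AEStronglyMeasurable f μ) (hb : ∀ a, ‖f a‖ ≤ 1) : Integrable f μ :=
  (integrable_const 1).mono' hf (Filter.Eventually.of_forall hb)

lemma mix_setIntegral [MeasurableSpace α] (x y : α) {f : α → ℝ} (hf : StronglyMeasurable f)
    (hb : ∀ a, ‖f a‖ ≤ 1) {s : Set α} (hs : MeasurableSet s) :
    ∫ ω in s, f ω ∂(mix x y) =
      2⁻¹ * ((if x ∈ s then f x else 0) + (if y ∈ s then f y else 0)) := by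
  classical
  have h1 : Integrable f ((Measure.dirac x).restrict s) :=
    bdd_integrable hf.aestronglyMeasurable hb
  have h2 : Integrable f ((Measure.dirac y).restrict s) :=
    bdd_integrable hf.aestronglyMeasurable hb
  rw [mix, Measure.restrict_smul, Measure.restrict_add, integral_smul_measure,
    integral_add_measure h1 h2, setIntegral_dirac' hf x hs, setIntegral_dirac' hf y hs]
  simp [smul_eq_mul, ENNReal.toReal_inv]

lemma mix_condexp_sep {m : MeasurableSpace α} [m0 : MeasurableSpace α] (hm : m ≤ m0) {x y : α}
    {D : Set α} (hD : MeasurableSet[m] D) (hx : x ∈ D) (hy : y ∉ D)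
    {f : α → ℝ} (hf : StronglyMeasurable f) (hb : ∀ a, ‖f a‖ ≤ 1) :
    (mix x y)[f|m] =ᵐ[mix x y] fun ω => if ω ∈ D then f x else f y := by
  classical
  haveI := mix_prob x y
  have hgm' : StronglyMeasurable[m] (fun ω => if ω ∈ D then f x else f y) :=
    StronglyMeasurable.ite hD stronglyMeasurable_const stronglyMeasurable_const
  have hg : StronglyMeasurable[m0] (fun ω => if ω ∈ D then f x else f y) := hgm'.mono hm
  have hbg : ∀ a, ‖if a ∈ D then f x else f y‖ ≤ 1 := by
    intro a; split
    · exact hb x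
    · exact hb y
  refine (ae_eq_condExp_of_forall_setIntegral_eq hm
    (bdd_integrable (hf.aestronglyMeasurable (μ := mix x y)) hb)
    (fun s hs _ => (bdd_integrable (hg.aestronglyMeasurable (μ := mix x y)) hbg).integrableOn)
    (fun s hs _ => ?_) hgm'.aestronglyMeasurable).symm
  rw [mix_setIntegral x y hg hbg (hm s hs), mix_setIntegral x y hf hb (hm s hs)]
  simp [hx, hy]

lemma mix_condexp_glued {m : MeasurableSpace α} [m0 : MeasurableSpace α] (hm : m ≤ m0) {x y : α}
    (hglue : ∀ D : Set α, MeasurableSet[m] D → (x ∈ D ↔ y ∈ D))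
    {f : α → ℝ} (hf : StronglyMeasurable f) (hb : ∀ a, ‖f a‖ ≤ 1) :
    (mix x y)[f|m] =ᵐ[mix x y] fun _ => 2⁻¹ * (f x + f y) := by
  classical
  haveI := mix_prob x y
  have hbg : ∀ a : α, ‖(fun _ : α => 2⁻¹ * (f x + f y)) a‖ ≤ 1 := by
    intro a
    have h1 := hb x; have h2 := hb y
    simp only [Real.norm_eq_abs] at *
    rw [abs_mul, abs_of_nonneg (by norm_num : (0:ℝ) ≤ 2⁻¹)]
    have h3 := abs_add_le (f x) (f y)
    nlinarith
  refine (ae_eq_condExp_of_forall_setIntegral_eq hm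
    (bdd_integrable (hf.aestronglyMeasurable (μ := mix x y)) hb)
    (fun s hs _ => (integrable_const _).integrableOn)
    (fun s hs _ => ?_)
    ((stronglyMeasurable_const :
      StronglyMeasurable[m] fun _ : α => 2⁻¹ * (f x + f y)).aestronglyMeasurable)).symm
  rw [mix_setIntegral x y stronglyMeasurable_const hbg (hm s hs),
    mix_setIntegral x y hf hb (hm s hs)]
  by_cases hxs : x ∈ s
  · have hys : y ∈ s := (hglue s hs).mp hxs
    simp only [hxs, hys, if_true]; ring
  · have hys : y ∉ s := fun h => hxs ((hglue s hs).mpr h)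
    simp [hxs, hys]

lemma comap_mem_iff {β : Type*} [mβ : MeasurableSpace β] {g : α → β} {x y : α}
    (hgxy : g x = g y) {D : Set α} (hD : MeasurableSet[MeasurableSpace.comap g mβ] D) :
    x ∈ D ↔ y ∈ D := by
  obtain ⟨S, -, rfl⟩ := hD
  simp [Set.mem_preimage, hgxy]

lemma no_ae_eq [MeasurableSpace α] {μ : Measure α} [IsProbabilityMeasure μ] {f g : α → ℝ}
    (h : f =ᵐ[μ] g) (hne : ∀ a, f a ≠ g a) : False := by
  have h2 : ∀ᵐ a ∂μ, False := h.mono fun a ha => hne a ha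
  rw [ae_iff] at h2
  simp at h2

end Aux

namespace ThreeStates

open scoped Classical

/-! ### Auxiliary facts about the three-state example -/

lemma hPmix_eq : Pmix = mix wabc wcba := rfl

lemma window_le (s u : ℝ) : window Xc s u ≤ (inferInstance : MeasurableSpace Path) :=
  iSup₂_le fun r _ => (measurable_pi_apply r).comap_le

lemma at1_le (t : ℝ) : at1 Xc t ≤ (inferInstance : MeasurableSpace Path) :=
  (measurable_pi_apply t).comap_le

lemma at2_le (s u : ℝ) : at2 Xc s u ≤ (inferInstance : MeasurableSpace Path) :=
  ((measurable_pi_apply s).prodMk (measurable_pi_apply u)).comap_le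

lemma at1_le_window {t s u : ℝ} (h : t ∈ Set.Icc s u) : at1 Xc t ≤ window Xc s u :=
  le_iSup₂ (f := fun r (_ : r ∈ Set.Icc s u) => MeasurableSpace.comap (Xc r) inferInstance) t h

lemma window_mem_iff {s u : ℝ} {B : Set Path} (hB : MeasurableSet[window Xc s u] B)
    {ω ω' : Path} (h : ∀ t ∈ Set.Icc s u, ω t = ω' t) : ω ∈ B ↔ ω' ∈ B := by
  have hle : window Xc s u ≤
      MeasurableSpace.comap (fun (ω : Path) (t : Set.Icc s u) => ω t) MeasurableSpace.pi := by
    refine iSup₂_le fun r hr => ?_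
    have hXc : Xc r = (fun f : Set.Icc s u → 𝒮 => f ⟨r, hr⟩) ∘
        (fun (ω : Path) (t : Set.Icc s u) => ω t) := rfl
    rw [hXc, ← MeasurableSpace.comap_comp]
    exact MeasurableSpace.comap_mono (measurable_pi_apply _).comap_le
  exact comap_mem_iff (g := fun (ω : Path) (t : Set.Icc s u) => ω t)
    (funext fun t => h t t.2) (hle B hB)

lemma wabc0 : wabc 0 = 0 := by norm_num [wabc]
lemma wabc13 : wabc (1/3) = 1 := by norm_num [wabc]
lemma wabc1 : wabc 1 = 2 := by norm_num [wabc]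
lemma wcba0 : wcba 0 = 2 := by norm_num [wcba]
lemma wcba13 : wcba (1/3) = 1 := by norm_num [wcba]
lemma wcba1 : wcba 1 = 0 := by norm_num [wcba]

lemma weq_of {t : ℝ} (h : wabc t = wcba t) : 1/3 ≤ t ∧ t < 2/3 := by
  unfold wabc wcba at h
  split_ifs at h with h1 h2
  · exact absurd h (by decide)
  · exact ⟨not_lt.1 h1, h2⟩
  · exact absurd h (by decide)

lemma weq {t : ℝ} (h1 : 1/3 ≤ t) (h2 : t < 2/3) : wabc t = wcba t := by
  unfold wabc wcba
  rw [if_neg (not_lt.2 h1), if_neg (not_lt.2 h1), if_pos h2, if_pos h2]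

lemma Pmix_apply {S : Set Path} (hS : MeasurableSet S) :
    Pmix S = 2⁻¹ * ((if wabc ∈ S then 1 else 0) + (if wcba ∈ S then 1 else 0)) := by
  classical
  simp only [Pmix, Measure.smul_apply, Measure.add_apply, Measure.dirac_apply' _ hS,
    Set.indicator_apply, Pi.one_apply, smul_eq_mul]

lemma reciprocal : IsReciprocal Xc Pmix := by
  classical
  intro s u h0s hsu hu1 A B C hA hB hC
  haveI := mix_prob wabc wcba
  have hm := at2_le s u
  have hA' : MeasurableSet A := window_le 0 s A hA
  have hB' : MeasurableSet B := window_le s u B hB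
  have hC' : MeasurableSet C := window_le u 1 C hC
  rw [hPmix_eq]
  by_cases hsep : wabc s = wcba s ∧ wabc u = wcba u
  · -- the pair (X s, X u) does not separate the two paths: both are `b` at `s` and `u`
    have hglue : ∀ D : Set Path, MeasurableSet[at2 Xc s u] D → (wabc ∈ D ↔ wcba ∈ D) := by
      intro D hD
      exact comap_mem_iff (g := fun ω : Path => (Xc s ω, Xc u ω)) (x := wabc) (y := wcba)
        (show (wabc s, wabc u) = (wcba s, wcba u) by rw [hsep.1, hsep.2]) hD
    have hs13 := weq_of hsep.1
    have hu13 := weq_of hsep.2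
    have hBiff : wabc ∈ B ↔ wcba ∈ B :=
      window_mem_iff hB fun t ht => weq (le_trans hs13.1 ht.1) (lt_of_le_of_lt ht.2 hu13.2)
    have hBv : ind B wabc = ind B wcba := by
      rw [ind_apply, ind_apply]
      by_cases h : wabc ∈ B
      · rw [if_pos h, if_pos (hBiff.mp h)]
      · rw [if_neg h, if_neg fun hh => h (hBiff.mpr hh)]
    have e1 := mix_condexp_glued hm hglue (ind_sm ((hA'.inter hB').inter hC')) (ind_norm _)
    have e2 := mix_condexp_glued hm hglue (ind_sm (hA'.inter hC')) (ind_norm _)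
    have e3 := mix_condexp_glued hm hglue (ind_sm hB') (ind_norm _)
    refine e1.trans (Filter.EventuallyEq.trans ?_ (e2.mul e3).symm)
    refine Filter.Eventually.of_forall fun ω => ?_
    simp only [Pi.mul_apply, ind_split, ← hBv]
    ring
  · -- the pair (X s, X u) separates the two paths
    have hne : wabc s ≠ wcba s ∨ wabc u ≠ wcba u := by tauto
    set D := (fun ω : Path => (Xc s ω, Xc u ω)) ⁻¹' {(wabc s, wabc u)} with hDdef
    have hD : MeasurableSet[at2 Xc s u] D :=
      ⟨{(wabc s, wabc u)}, measurableSet_singleton _, rfl⟩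
    have hx : wabc ∈ D := rfl
    have hy : wcba ∉ D := by
      intro hmem
      have hpair : (wcba s, wcba u) = (wabc s, wabc u) := hmem
      rcases hne with h | h
      · exact h (congrArg Prod.fst hpair).symm
      · exact h (congrArg Prod.snd hpair).symm
    have e1 := mix_condexp_sep hm hD hx hy (ind_sm ((hA'.inter hB').inter hC')) (ind_norm _)
    have e2 := mix_condexp_sep hm hD hx hy (ind_sm (hA'.inter hC')) (ind_norm _)
    have e3 := mix_condexp_sep hm hD hx hy (ind_sm hB') (ind_norm _)
    refine e1.trans (Filter.EventuallyEq.trans ?_ (e2.mul e3).symm)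
    refine Filter.Eventually.of_forall fun ω => ?_
    simp only [Pi.mul_apply]
    split_ifs with h
    · exact ind_split A B C wabc
    · exact ind_split A B C wcba

/-- there exists a reciprocal probability measure which is not Markov:
the half-half mixture of the two deterministic three-state paths is reciprocal, gives
conditional probability `0` to `{X_1 = a}` given `X_0 = a, X_{1/3} = b` and `1/2` given
`X_{1/3} = b` alone, and fails the (forward) Markov property. -/
theorem reciprocal_not_markov :
    IsProbabilityMeasure Pmix ∧
    IsReciprocal Xc Pmix ∧
    -- P(X_1 = a  and  X_0 = a, X_{1/3} = b) = 0 while P(X_0 = a, X_{1/3} = b) > 0,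
    -- i.e. P(X_1 = a | X_0 = a, X_{1/3} = b) = 0:
    Pmix {ω | ω 0 = 0 ∧ ω (1/3) = 1 ∧ ω 1 = 0} = 0 ∧
    0 < Pmix {ω | ω 0 = 0 ∧ ω (1/3) = 1} ∧
    -- P(X_1 = a | X_{1/3} = b) = 1/2:
    2 * Pmix {ω | ω (1/3) = 1 ∧ ω 1 = 0} = Pmix {ω | ω (1/3) = 1} ∧
    ¬ IsForwardMarkov Xc Pmix ∧
    ¬ IsMarkov Xc Pmix := by
  classical
  haveI := mix_prob wabc wcba
  have f20 : (2:𝒮) ≠ 0 := by decide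
  have f21 : (2:𝒮) ≠ 1 := by decide
  have f10 : (1:𝒮) ≠ 0 := by decide
  -- basic measurable sets
  have hA0at : MeasurableSet[at1 Xc 0] {ω : Path | ω 0 = 0} :=
    ⟨{0}, measurableSet_singleton _, rfl⟩
  have hB1at : MeasurableSet[at1 Xc 1] {ω : Path | ω 1 = 0} :=
    ⟨{0}, measurableSet_singleton _, rfl⟩
  have hA0 : MeasurableSet {ω : Path | ω 0 = 0} := at1_le 0 _ hA0at
  have hB1 : MeasurableSet {ω : Path | ω 1 = 0} := at1_le 1 _ hB1at
  have hglue : ∀ D : Set Path, MeasurableSet[at1 Xc (1/3)] D → (wabc ∈ D ↔ wcba ∈ D) := by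
    intro D hD
    exact comap_mem_iff (g := Xc (1/3)) (x := wabc) (y := wcba)
      (show wabc (1/3) = wcba (1/3) by rw [wabc13, wcba13]) hD
  -- memberships
  have memA_x : wabc ∈ {ω : Path | ω 0 = 0} := wabc0
  have memA_y : wcba ∉ {ω : Path | ω 0 = 0} := by
    intro h; have h' : wcba 0 = 0 := h; rw [wcba0] at h'; exact f20 h'
  have memB_x : wabc ∉ {ω : Path | ω 1 = 0} := by
    intro h; have h' : wabc 1 = 0 := h; rw [wabc1] at h'; exact f20 h'
  have memB_y : wcba ∈ {ω : Path | ω 1 = 0} := wcba1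
  -- indicator values
  have iA_x : ind {ω : Path | ω 0 = 0} wabc = 1 := by
    rw [ind_apply, if_pos memA_x]
  have iA_y : ind {ω : Path | ω 0 = 0} wcba = 0 := by
    rw [ind_apply, if_neg memA_y]
  have iB_x : ind {ω : Path | ω 1 = 0} wabc = 0 := by
    rw [ind_apply, if_neg memB_x]
  have iB_y : ind {ω : Path | ω 1 = 0} wcba = 1 := by
    rw [ind_apply, if_pos memB_y]
  have iAB_x : ind ({ω : Path | ω 0 = 0} ∩ {ω : Path | ω 1 = 0}) wabc = 0 := by
    rw [ind_apply, if_neg]; rintro ⟨-, h⟩; exact memB_x h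
  have iAB_y : ind ({ω : Path | ω 0 = 0} ∩ {ω : Path | ω 1 = 0}) wcba = 0 := by
    rw [ind_apply, if_neg]; rintro ⟨h, -⟩; exact memA_y h
  refine ⟨?_, reciprocal, ?_, ?_, ?_, ?_, ?_⟩
  · rw [hPmix_eq]; exact mix_prob wabc wcba
  · -- Pmix {X0 = a, X1/3 = b, X1 = a} = 0
    have hS : MeasurableSet {ω : Path | ω 0 = 0 ∧ ω (1/3) = 1 ∧ ω 1 = 0} := by
      have hset : {ω : Path | ω 0 = 0 ∧ ω (1/3) = 1 ∧ ω 1 = 0} =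
          (fun ω : Path => ω 0) ⁻¹' {0} ∩
            ((fun ω : Path => ω (1/3)) ⁻¹' {1} ∩ (fun ω : Path => ω 1) ⁻¹' {0}) := rfl
      rw [hset]
      exact ((measurable_pi_apply _) (measurableSet_singleton _)).inter
        (((measurable_pi_apply _) (measurableSet_singleton _)).inter
          ((measurable_pi_apply _) (measurableSet_singleton _)))
    rw [Pmix_apply hS]
    simp [Set.mem_setOf_eq, wabc0, wabc13, wabc1, wcba0, wcba13, wcba1]
  · -- 0 < Pmix {X0 = a, X1/3 = b}
    have hS : MeasurableSet {ω : Path | ω 0 = 0 ∧ ω (1/3) = 1} := by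
      have hset : {ω : Path | ω 0 = 0 ∧ ω (1/3) = 1} =
          (fun ω : Path => ω 0) ⁻¹' {0} ∩ (fun ω : Path => ω (1/3)) ⁻¹' {1} := rfl
      rw [hset]
      exact ((measurable_pi_apply _) (measurableSet_singleton _)).inter
        ((measurable_pi_apply _) (measurableSet_singleton _))
    rw [Pmix_apply hS]
    simp only [Set.mem_setOf_eq, wabc0, wabc13, wabc1, wcba0, wcba13, wcba1]
    norm_num
  · -- 2 * Pmix {X1/3 = b, X1 = a} = Pmix {X1/3 = b}
    have hS1 : MeasurableSet {ω : Path | ω (1/3) = 1 ∧ ω 1 = 0} := by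
      have hset : {ω : Path | ω (1/3) = 1 ∧ ω 1 = 0} =
          (fun ω : Path => ω (1/3)) ⁻¹' {1} ∩ (fun ω : Path => ω 1) ⁻¹' {0} := rfl
      rw [hset]
      exact ((measurable_pi_apply _) (measurableSet_singleton _)).inter
        ((measurable_pi_apply _) (measurableSet_singleton _))
    have hS2 : MeasurableSet {ω : Path | ω (1/3) = 1} := by
      have hset : {ω : Path | ω (1/3) = 1} = (fun ω : Path => ω (1/3)) ⁻¹' {1} := rfl
      rw [hset]
      exact (measurable_pi_apply _) (measurableSet_singleton _)
    rw [Pmix_apply hS1, Pmix_apply hS2]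
    simp only [Set.mem_setOf_eq, wabc0, wabc13, wabc1, wcba0, wcba13, wcba1]
    norm_num [f20]
    exact mul_comm 2 2⁻¹
  · -- not forward Markov
    intro hFM
    have hBw : MeasurableSet[window Xc (1/3) 1] {ω : Path | ω 1 = 0} :=
      at1_le_window ⟨by norm_num, le_refl (1:ℝ)⟩ _ hB1at
    have spec := hFM (1/3) ⟨by norm_num, by norm_num⟩ _ hBw
    rw [hPmix_eq] at spec
    have hDw : MeasurableSet[window Xc 0 (1/3)] {ω : Path | ω 0 = 0} :=
      at1_le_window ⟨le_refl (0:ℝ), by norm_num⟩ _ hA0at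
    have e1 := mix_condexp_sep (window_le 0 (1/3)) hDw memA_x memA_y (ind_sm hB1) (ind_norm _)
    have e2 := mix_condexp_glued (at1_le (1/3)) hglue (ind_sm hB1) (ind_norm _)
    have chain := (e1.symm.trans spec).trans e2
    rw [iB_x, iB_y] at chain
    exact no_ae_eq chain fun ω => by split_ifs <;> norm_num
  · -- not Markov
    intro hM
    have hAw : MeasurableSet[window Xc 0 (1/3)] {ω : Path | ω 0 = 0} :=
      at1_le_window ⟨le_refl (0:ℝ), by norm_num⟩ _ hA0at
    have hBw : MeasurableSet[window Xc (1/3) 1] {ω : Path | ω 1 = 0} :=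
      at1_le_window ⟨by norm_num, le_refl (1:ℝ)⟩ _ hB1at
    have spec := hM (1/3) ⟨by norm_num, by norm_num⟩ _ _ hAw hBw
    rw [hPmix_eq] at spec
    have e1 := mix_condexp_glued (at1_le (1/3)) hglue (ind_sm (hA0.inter hB1)) (ind_norm _)
    have e2 := mix_condexp_glued (at1_le (1/3)) hglue (ind_sm hA0) (ind_norm _)
    have e3 := mix_condexp_glued (at1_le (1/3)) hglue (ind_sm hB1) (ind_norm _)
    have chain := (e1.symm.trans spec).trans (e2.mul e3)
    rw [iAB_x, iAB_y, iA_x, iA_y, iB_x, iB_y] at chain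
    refine no_ae_eq chain fun ω => ?_
    show 2⁻¹ * ((0:ℝ) + 0) ≠ _
    simp [Pi.mul_apply]

end ThreeStates
end
end

section
/- Let P be a reciprocal probability measure such that X_1 is P-a.s. equal to a constant. Then P is Markov: for all 0 ≤ s ≤ u ≤ 1 and bounded measurable f, E_P(f(X_u) | 𝒜_{[0,s]}) = E_P(f(X_u) | X_s), P-a.s. -/
open MeasureTheory

noncomputable section

variable {Ω 𝒳 : Type*}

/-- Doob–Dynkin factorization for real-valued functions: a function measurable with respect to
the σ-algebra generated by `Y` factors through `Y`. -/
theorem measurable_comap_factor {α β : Type*} [mβ : MeasurableSpace β] {Y : α → β} {g : α → ℝ}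
    (hg : Measurable[MeasurableSpace.comap Y mβ] g) :
    ∃ h : β → ℝ, Measurable h ∧ ∀ a, g a = h (Y a) := by
  classical
  have hq : ∀ q : ℚ, MeasurableSet[MeasurableSpace.comap Y mβ] (g ⁻¹' Set.Iio (q : ℝ)) :=
    fun q => hg measurableSet_Iio
  choose S hSm hSeq using fun q => (MeasurableSpace.measurableSet_comap.mp (hq q))
  set H : β → EReal := fun x => ⨅ q : ℚ, (if x ∈ S q then ((q : ℝ) : EReal) else ⊤) with hHdef
  have hH : Measurable H :=
    Measurable.iInf fun q => Measurable.ite (hSm q) measurable_const measurable_const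
  refine ⟨fun x => (H x).toReal, measurable_ereal_toReal.comp hH, fun a => ?_⟩
  have hmem : ∀ q : ℚ, Y a ∈ S q ↔ g a < (q : ℝ) := by
    intro q
    constructor
    · intro h
      have h2 : a ∈ Y ⁻¹' S q := h
      rw [hSeq q] at h2
      exact h2
    · intro h
      have h2 : a ∈ g ⁻¹' Set.Iio (q : ℝ) := h
      rw [← hSeq q] at h2
      exact h2
  have hval : H (Y a) = ((g a : ℝ) : EReal) := by
    apply le_antisymm
    · rw [hHdef]
      simp only
      rw [iInf_le_iff]
      intro b hb
      by_contra hlt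
      rw [not_le] at hlt
      obtain ⟨x, hx1, hx2⟩ := EReal.exists_rat_btwn_of_lt hlt
      have hbx := hb x
      rw [if_pos ((hmem x).mpr (by exact_mod_cast hx1))] at hbx
      exact absurd (hbx.trans_lt hx2) (lt_irrefl _)
    · refine le_iInf fun q => ?_
      by_cases h : Y a ∈ S q
      · rw [if_pos h]
        exact_mod_cast ((hmem q).mp h).le
      · rw [if_neg h]
        exact le_top
  show g a = (H (Y a)).toReal
  rw [hval, EReal.toReal_coe]

/-- a reciprocal measure whose final position `X_1` is a.s. constant is Markov:
for all `0 ≤ s ≤ u ≤ 1` and bounded measurable `f`,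
`E_P(f(X_u) | 𝒜_{[0,s]}) = E_P(f(X_u) | X_s)` a.s. -/
theorem reciprocal_pinned_endpoint_is_markov
    [MeasurableSpace Ω] [MeasurableSpace 𝒳]
    (X : ℝ → Ω → 𝒳) (hX : ∀ t, Measurable (X t))
    (P : Measure Ω) [IsProbabilityMeasure P]
    (hrec : ∀ s u : ℝ, 0 ≤ s → s ≤ u → u ≤ 1 → ∀ B : Set Ω, MeasurableSet[window X s u] B →
      P[ind B | window X 0 s ⊔ window X u 1] =ᵐ[P] P[ind B | at2 X s u])
    (hconst : ∃ c : 𝒳, ∀ᵐ ω ∂P, X 1 ω = c) :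
    ∀ s u : ℝ, 0 ≤ s → s ≤ u → u ≤ 1 → ∀ f : 𝒳 → ℝ, Measurable f → (∃ C, ∀ x, |f x| ≤ C) →
      P[(fun ω => f (X u ω)) | window X 0 s] =ᵐ[P] P[(fun ω => f (X u ω)) | at1 X s] := by
  rename_i mΩ m𝒳 _instP
  obtain ⟨c, hc⟩ := hconst
  intro s u hs hsu hu1 f hfm hfb
  have hwin_le : ∀ a b : ℝ, window X a b ≤ mΩ := by
    intro a b
    refine iSup₂_le fun r _ => ?_
    exact (hX r).comap_le
  have hm1 : (window X 0 s ⊔ window X 1 1) ≤ mΩ := sup_le (hwin_le 0 s) (hwin_le 1 1)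
  have hm2 : (at2 X s 1) ≤ mΩ := ((hX s).prodMk (hX 1)).comap_le
  have hw0s : window X 0 s ≤ mΩ := hwin_le 0 s
  have hat1 : at1 X s ≤ mΩ := (hX s).comap_le
  have hat1_w : at1 X s ≤ window X 0 s := by
    have := le_biSup (f := fun r => MeasurableSpace.comap (X r) inferInstance)
      (s := Set.Icc (0:ℝ) s) (i := s) ⟨hs, le_rfl⟩
    exact this
  have hw0s_m1 : window X 0 s ≤ (window X 0 s ⊔ window X 1 1) := le_sup_left
  have hat1_m2 : at1 X s ≤ at2 X s 1 := by
    show MeasurableSpace.comap (X s) inferInstance ≤ _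
    have heq : MeasurableSpace.comap (X s) inferInstance
        = MeasurableSpace.comap (fun ω => (X s ω, X 1 ω))
            (MeasurableSpace.comap Prod.fst inferInstance) := by
      rw [MeasurableSpace.comap_comp]
      rfl
    rw [heq]
    exact MeasurableSpace.comap_mono measurable_fst.comap_le
  have hXu_w : Measurable[window X s 1] (X u) := by
    refine measurable_iff_comap_le.mpr ?_
    exact le_biSup (f := fun r => MeasurableSpace.comap (X r) inferInstance)
      (s := Set.Icc s (1:ℝ)) (i := u) ⟨hsu, hu1⟩
  set ν := P.map (X u) with hν
  have hmp : MeasurePreserving (X u) P ν := ⟨hX u, rfl⟩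
  haveI : IsProbabilityMeasure ν := Measure.isProbabilityMeasure_map (hX u).aemeasurable
  -- Step A: extend the reciprocal property from indicators to all `ν`-integrable `g`.
  have key : ∀ ⦃g : 𝒳 → ℝ⦄, Integrable g ν →
      P[(g ∘ X u) | (window X 0 s ⊔ window X 1 1)] =ᵐ[P] P[(g ∘ X u) | (at2 X s 1)] := by
    haveI : Fact ((1 : ENNReal) ≤ 1) := ⟨le_rfl⟩
    refine Integrable.induction (μ := ν)
      (P := fun g => P[(g ∘ X u) | (window X 0 s ⊔ window X 1 1)] =ᵐ[P] P[(g ∘ X u) | (at2 X s 1)]) ?_ ?_ ?_ ?_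
    · -- indicators
      intro b S hS _
      have hBmeas : MeasurableSet[window X s 1] (X u ⁻¹' S) := hXu_w hS
      have hrec' := hrec s 1 hs (hsu.trans hu1) le_rfl _ hBmeas
      have hcomp : (S.indicator fun _ => b) ∘ X u = b • ind (X u ⁻¹' S) := by
        funext ω
        by_cases h : X u ω ∈ S <;>
          simp [ind, Set.indicator, Function.comp, h]
      rw [hcomp]
      refine (condExp_smul b _ _).trans ?_
      refine Filter.EventuallyEq.trans ?_ (condExp_smul b _ _).symm
      exact hrec'.mono fun ω h => by simp [Pi.smul_apply, h]
    · -- addition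
      intro g1 g2 _ hi1 hi2 h1 h2
      have hI1 : Integrable (g1 ∘ X u) P :=
        (integrable_map_measure hi1.aestronglyMeasurable (hX u).aemeasurable).mp hi1
      have hI2 : Integrable (g2 ∘ X u) P :=
        (integrable_map_measure hi2.aestronglyMeasurable (hX u).aemeasurable).mp hi2
      have hcomp : (g1 + g2) ∘ X u = g1 ∘ X u + g2 ∘ X u := rfl
      rw [hcomp]
      exact (condExp_add hI1 hI2 _).trans ((h1.add h2).trans (condExp_add hI1 hI2 _).symm)
    · -- closedness in L¹
      have hTcont : Continuous (Lp.compMeasurePreserving (p := 1) (E := ℝ) (X u) hmp) :=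
        (Lp.isometry_compMeasurePreserving hmp).continuous
      have hΦ1 : Continuous fun g : 𝒳 →₁[ν] ℝ =>
          condExpL1CLM ℝ hm1 P (Lp.compMeasurePreserving (X u) hmp g) :=
        (condExpL1CLM ℝ hm1 P).continuous.comp hTcont
      have hΦ2 : Continuous fun g : 𝒳 →₁[ν] ℝ =>
          condExpL1CLM ℝ hm2 P (Lp.compMeasurePreserving (X u) hmp g) :=
        (condExpL1CLM ℝ hm2 P).continuous.comp hTcont
      have hset : {g : 𝒳 →₁[ν] ℝ | P[(⇑g ∘ X u) | (window X 0 s ⊔ window X 1 1)] =ᵐ[P] P[(⇑g ∘ X u) | (at2 X s 1)]}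
          = {g : 𝒳 →₁[ν] ℝ | condExpL1CLM ℝ hm1 P (Lp.compMeasurePreserving (X u) hmp g)
              = condExpL1CLM ℝ hm2 P (Lp.compMeasurePreserving (X u) hmp g)} := by
        ext g
        set T := Lp.compMeasurePreserving (p := 1) (E := ℝ) (X u) hmp g with hT
        have hTg : ⇑T =ᵐ[P] ⇑g ∘ X u := Lp.coeFn_compMeasurePreserving g hmp
        have e1 : ⇑(condExpL1CLM ℝ hm1 P T) =ᵐ[P] P[(⇑g ∘ X u) | (window X 0 s ⊔ window X 1 1)] := by
          have h1 : P[⇑T | (window X 0 s ⊔ window X 1 1)] =ᵐ[P] ⇑(condExpL1 hm1 P ⇑T) := condExp_ae_eq_condExpL1 hm1 _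
          rw [condExpL1_eq (L1.integrable_coeFn T), Integrable.toL1_coeFn] at h1
          exact h1.symm.trans (condExp_congr_ae hTg)
        have e2 : ⇑(condExpL1CLM ℝ hm2 P T) =ᵐ[P] P[(⇑g ∘ X u) | (at2 X s 1)] := by
          have h2 : P[⇑T | (at2 X s 1)] =ᵐ[P] ⇑(condExpL1 hm2 P ⇑T) := condExp_ae_eq_condExpL1 hm2 _
          rw [condExpL1_eq (L1.integrable_coeFn T), Integrable.toL1_coeFn] at h2
          exact h2.symm.trans (condExp_congr_ae hTg)
        constructor
        · intro hQ
          simp only [Set.mem_setOf_eq] at hQ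
          exact Lp.ext (e1.trans (hQ.trans e2.symm))
        · intro heq
          refine e1.symm.trans (Filter.EventuallyEq.trans ?_ e2)
          rw [heq]
      rw [hset]
      exact isClosed_eq hΦ1 hΦ2
    · -- a.e. congruence
      intro g1 g2 hae _ h1
      have hcomp : g1 ∘ X u =ᵐ[P] g2 ∘ X u := ae_eq_comp (hX u).aemeasurable hae
      exact (condExp_congr_ae hcomp.symm).trans (h1.trans (condExp_congr_ae hcomp))
  obtain ⟨C, hC⟩ := hfb
  have hfi : Integrable f ν := by
    refine Integrable.mono' (integrable_const C) hfm.aestronglyMeasurable ?_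
    exact Filter.Eventually.of_forall fun x => by simpa [Real.norm_eq_abs] using hC x
  have hA : P[(fun ω => f (X u ω)) | (window X 0 s ⊔ window X 1 1)] =ᵐ[P] P[(fun ω => f (X u ω)) | (at2 X s 1)] := key hfi
  -- Step B: the conditional expectation given `(X s, X 1)` is a.e. a function of `X s` alone.
  set φ := P[(fun ω => f (X u ω)) | (at2 X s 1)] with hφdef
  have hφm : Measurable[(at2 X s 1)] φ := stronglyMeasurable_condExp.measurable
  obtain ⟨g2, hg2m, hg2e⟩ :=
    measurable_comap_factor (Y := fun ω => (X s ω, X 1 ω)) (g := φ) hφm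
  set h : 𝒳 → ℝ := fun x => g2 (x, c) with hhdef
  have hhm : Measurable h := hg2m.comp (measurable_id.prodMk measurable_const)
  have hφh : φ =ᵐ[P] fun ω => h (X s ω) := by
    filter_upwards [hc] with ω hω
    rw [hg2e ω, hω]
  have hint_h : Integrable (fun ω => h (X s ω)) P := integrable_condExp.congr hφh
  have hsm_at1 : StronglyMeasurable[at1 X s] fun ω => h (X s ω) :=
    (hhm.comp (comap_measurable (X s))).stronglyMeasurable
  have hsm_w0s : StronglyMeasurable[window X 0 s] fun ω => h (X s ω) :=
    hsm_at1.mono hat1_w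
  have hLHS : P[(fun ω => f (X u ω)) | window X 0 s] =ᵐ[P] fun ω => h (X s ω) := by
    calc P[(fun ω => f (X u ω)) | window X 0 s]
        =ᵐ[P] P[P[(fun ω => f (X u ω)) | (window X 0 s ⊔ window X 1 1)] | window X 0 s] :=
          (condExp_condExp_of_le hw0s_m1 hm1).symm
      _ =ᵐ[P] P[φ | window X 0 s] := condExp_congr_ae hA
      _ =ᵐ[P] P[(fun ω => h (X s ω)) | window X 0 s] := condExp_congr_ae hφh
      _ =ᵐ[P] fun ω => h (X s ω) := by
          rw [condExp_of_stronglyMeasurable hw0s hsm_w0s hint_h]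
  have hRHS : P[(fun ω => f (X u ω)) | at1 X s] =ᵐ[P] fun ω => h (X s ω) := by
    calc P[(fun ω => f (X u ω)) | at1 X s]
        =ᵐ[P] P[φ | at1 X s] := (condExp_condExp_of_le hat1_m2 hm2).symm
      _ =ᵐ[P] P[(fun ω => h (X s ω)) | at1 X s] := condExp_congr_ae hφh
      _ =ᵐ[P] fun ω => h (X s ω) := by
          rw [condExp_of_stronglyMeasurable hat1 hsm_at1 hint_h]
  exact hLHS.trans hRHS.symm
end
end

section
/- Let R be a reciprocal measure with everywhere-defined measurable bridges, and let π be a probability measure on 𝒳² with π ≪ R_{01}. Then the mixture P = ∫ R^{xy} π(dxdy) is absolutely continuous with respect to R and dP/dR = (dπ/dR_{01})(X_0, X_1), R-a.s. Conversely, if P = h(X_0, X_1) · R for some nonnegative measurable h with E_R h(X_0,X_1) = 1, then P = ∫ R^{xy} π(dxdy) with π(dxdy) = h(x,y) R_{01}(dxdy). -/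
open MeasureTheory

noncomputable section

variable {Ω 𝒳 : Type*}

/-- `B` is an (everywhere-defined, measurable) bridge system for `R`: each `B (x,y)` is a
probability measure pinned at endpoints `(x,y)`, `B` is measurable, and `R` is the mixture of
its bridges with respect to its own endpoint marginal `R_{01}`. -/
def IsBridgeSystem [MeasurableSpace Ω] [MeasurableSpace 𝒳]
    (X : ℝ → Ω → 𝒳) (R : Measure Ω) (B : 𝒳 × 𝒳 → Measure Ω) : Prop :=
  Measurable B ∧ (∀ p, IsProbabilityMeasure (B p)) ∧
  (∀ p : 𝒳 × 𝒳, B p {ω | X 0 ω = p.1 ∧ X 1 ω = p.2} = 1) ∧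
  R = (R.map (fun ω => (X 0 ω, X 1 ω))).bind B

/-- a mixture `P = ∫ R^{xy} π(dxdy)` with `π ≪ R_{01}` is dominated by `R` with
density `dP/dR = (dπ/dR_{01})(X_0, X_1)`; conversely every `P = h(X_0,X_1)·R` is the mixture
of the bridges of `R` by `π(dxdy) = h(x,y) R_{01}(dxdy)`. -/
theorem dominated_mixtures_of_bridges
    [MeasurableSpace Ω] [MeasurableSpace 𝒳]
    (X : ℝ → Ω → 𝒳) (hX : ∀ t, Measurable (X t))
    (R : Measure Ω) [IsProbabilityMeasure R] (hRrec : IsReciprocal X R)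
    (B : 𝒳 × 𝒳 → Measure Ω) (hB : IsBridgeSystem X R B) :
    (∀ π : Measure (𝒳 × 𝒳), IsProbabilityMeasure π →
      π ≪ R.map (fun ω => (X 0 ω, X 1 ω)) →
      (π.bind B ≪ R ∧
        (fun ω => (π.bind B).rnDeriv R ω) =ᵐ[R]
          fun ω => π.rnDeriv (R.map (fun ω' => (X 0 ω', X 1 ω'))) (X 0 ω, X 1 ω))) ∧
    (∀ h : 𝒳 × 𝒳 → ENNReal, Measurable h →
      ∫⁻ p, h p ∂(R.map (fun ω => (X 0 ω, X 1 ω))) = 1 →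
      R.withDensity (fun ω => h (X 0 ω, X 1 ω)) =
        ((R.map (fun ω => (X 0 ω, X 1 ω))).withDensity h).bind B) := by
  classical
  obtain ⟨hBmeas, hBprob, hBpin, hR⟩ := hB
  set e : Ω → 𝒳 × 𝒳 := fun ω => (X 0 ω, X 1 ω) with he
  have hem : Measurable e := (hX 0).prodMk (hX 1)
  set μ : Measure (𝒳 × 𝒳) := R.map e with hμ
  have hμprob : IsProbabilityMeasure μ := Measure.isProbabilityMeasure_map hem.aemeasurable
  -- a.e. ω ∂(B p), e ω lies in any measurable set containing p
  have hae : ∀ (p : 𝒳 × 𝒳) (A : Set (𝒳 × 𝒳)), MeasurableSet A → p ∈ A →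
      ∀ᵐ ω ∂(B p), e ω ∈ A := by
    intro p A hA hpA
    haveI := hBprob p
    have hsub : {ω | X 0 ω = p.1 ∧ X 1 ω = p.2} ⊆ e ⁻¹' A := by
      intro ω hω
      have : e ω = p := Prod.ext hω.1 hω.2
      simpa [this] using hpA
    have h1 : B p (e ⁻¹' A) = 1 :=
      le_antisymm prob_le_one (le_trans (hBpin p).ge (measure_mono hsub))
    have : B p ((e ⁻¹' A)ᶜ) = 0 := by
      rw [measure_compl (hem hA) (measure_ne_top _ _), h1]
      simp
    exact (ae_iff).2 this
  -- key: mixture with density h equals R with density h ∘ e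
  have key : ∀ h : 𝒳 × 𝒳 → ENNReal, Measurable h →
      (μ.withDensity h).bind B = R.withDensity (fun ω => h (e ω)) := by
    intro h hh
    ext s hs
    have hg : Measurable (fun p => B p s) := (Measure.measurable_coe hs).comp hBmeas
    rw [Measure.bind_apply hs hBmeas.aemeasurable, withDensity_apply _ hs,
      lintegral_withDensity_eq_lintegral_mul _ hh hg]
    have hRs : ∫⁻ ω in s, h (e ω) ∂ R
        = ∫⁻ ω, s.indicator (fun ω => h (e ω)) ω ∂ R := by
      exact (lintegral_indicator hs _).symm
    rw [hRs]
    conv_rhs => rw [hR]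
    have hf : Measurable (Set.indicator s fun ω => h (e ω)) := (hh.comp hem).indicator hs
    rw [Measure.lintegral_bind hBmeas.aemeasurable hf.aemeasurable]
    simp only [Pi.mul_apply]
    refine lintegral_congr fun p => ?_
    have hone : ∀ᵐ ω ∂(B p), h (e ω) = h p := by
      filter_upwards [hae p (h ⁻¹' {h p}) (hh (measurableSet_singleton _)) rfl] with ω hω
      simpa using hω
    calc h p * B p s = ∫⁻ ω, s.indicator (fun _ => h p) ω ∂(B p) := by
          rw [lintegral_indicator_const hs]
      _ = ∫⁻ ω, s.indicator (fun ω => h (e ω)) ω ∂(B p) := by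
          refine lintegral_congr_ae ?_
          filter_upwards [hone] with ω hω
          by_cases hωs : ω ∈ s <;> simp [hωs, hω]
  refine ⟨?_, ?_⟩
  · intro π hπprob hπac
    have hd : Measurable (π.rnDeriv μ) := Measure.measurable_rnDeriv _ _
    have hπ : μ.withDensity (π.rnDeriv μ) = π := Measure.withDensity_rnDeriv_eq _ _ hπac
    have hbind : π.bind B = R.withDensity (fun ω => π.rnDeriv μ (e ω)) := by
      conv_lhs => rw [← hπ]
      exact key _ hd
    constructor
    · rw [hbind]; exact withDensity_absolutelyContinuous _ _
    · rw [hbind]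
      exact Measure.rnDeriv_withDensity R (hd.comp hem)
  · intro h hh _
    exact (key h hh).symm
end
end
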